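/- Let 0 < ξ₀ < ξ₁, 0 < η₀ < η₁, and let a, b > 0 satisfy a·η₀ = b·ξ₀. Suppose there exists a Borel probability measure μ on [0,∞)² such that ∬ s dμ = a², ∬ t dμ = b², ∬ s² dμ = a²ξ₁², ∬ s t dμ = a²η₀², ∬ t² dμ = b²η₁², ∬ s² t dμ = a²η₀²ξ₁², ∬ s t² dμ = a²η₀²η₁², and ∬ s² t² dμ = a²η₀²ξ₁²η₁². Then a ≤ s, where s := √( ξ₀²ξ₁²η₁² / (ξ₁²η₀² + ξ₀²η₁² − ξ₀²η₀²) ). -/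

import Mathlib

set_option maxHeartbeats 1000000

open MeasureTheory

/-- Necessary condition `a ≤ s` for subnormality of the first family of
2-variable weighted shifts, via the moments of a representing measure. -/
theorem stmt2 (ξ₀ ξ₁ η₀ η₁ a b : ℝ)
    (hξ₀ : 0 < ξ₀) (hξ : ξ₀ < ξ₁) (hη₀ : 0 < η₀) (hη : η₀ < η₁)
    (ha : 0 < a) (hb : 0 < b) (hcomm : a * η₀ = b * ξ₀)
    (μ : Measure (ℝ × ℝ)) (hprob : IsProbabilityMeasure μ)
    (hsupp : μ (Set.Ici (0 : ℝ) ×ˢ Set.Ici (0 : ℝ))ᶜ = 0)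
    (m10 : ∫ p, p.1 ∂μ = a ^ 2)
    (m01 : ∫ p, p.2 ∂μ = b ^ 2)
    (m20 : ∫ p, p.1 ^ 2 ∂μ = a ^ 2 * ξ₁ ^ 2)
    (m11 : ∫ p, p.1 * p.2 ∂μ = a ^ 2 * η₀ ^ 2)
    (m02 : ∫ p, p.2 ^ 2 ∂μ = b ^ 2 * η₁ ^ 2)
    (m21 : ∫ p, p.1 ^ 2 * p.2 ∂μ = a ^ 2 * η₀ ^ 2 * ξ₁ ^ 2)
    (m12 : ∫ p, p.1 * p.2 ^ 2 ∂μ = a ^ 2 * η₀ ^ 2 * η₁ ^ 2)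
    (m22 : ∫ p, p.1 ^ 2 * p.2 ^ 2 ∂μ = a ^ 2 * η₀ ^ 2 * ξ₁ ^ 2 * η₁ ^ 2) :
    a ≤ Real.sqrt (ξ₀ ^ 2 * ξ₁ ^ 2 * η₁ ^ 2 /
      (ξ₁ ^ 2 * η₀ ^ 2 + ξ₀ ^ 2 * η₁ ^ 2 - ξ₀ ^ 2 * η₀ ^ 2)) := by
  have hξ₁ : 0 < ξ₁ := hξ₀.trans hξ
  have hη₁ : 0 < η₁ := hη₀.trans hη
  -- integrability of each monomial, since its integral is nonzero
  have intof : ∀ (f : ℝ × ℝ → ℝ) (c : ℝ), 0 < c → (∫ p, f p ∂μ) = c →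
      Integrable f μ := by
    intro f c hc h
    by_contra hni
    rw [integral_undef hni] at h
    exact absurd h.symm (ne_of_gt hc)
  have I10 : Integrable (fun p : ℝ × ℝ => p.1) μ := intof _ _ (pow_pos ha 2) m10
  have I01 : Integrable (fun p : ℝ × ℝ => p.2) μ := intof _ _ (pow_pos hb 2) m01
  have I20 : Integrable (fun p : ℝ × ℝ => p.1 ^ 2) μ :=
    intof _ _ (mul_pos (pow_pos ha 2) (pow_pos hξ₁ 2)) m20
  have I11 : Integrable (fun p : ℝ × ℝ => p.1 * p.2) μ :=
    intof _ _ (mul_pos (pow_pos ha 2) (pow_pos hη₀ 2)) m11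
  have I02 : Integrable (fun p : ℝ × ℝ => p.2 ^ 2) μ :=
    intof _ _ (mul_pos (pow_pos hb 2) (pow_pos hη₁ 2)) m02
  have I21 : Integrable (fun p : ℝ × ℝ => p.1 ^ 2 * p.2) μ :=
    intof _ _ (mul_pos (mul_pos (pow_pos ha 2) (pow_pos hη₀ 2)) (pow_pos hξ₁ 2)) m21
  have I12 : Integrable (fun p : ℝ × ℝ => p.1 * p.2 ^ 2) μ :=
    intof _ _ (mul_pos (mul_pos (pow_pos ha 2) (pow_pos hη₀ 2)) (pow_pos hη₁ 2)) m12
  have I22 : Integrable (fun p : ℝ × ℝ => p.1 ^ 2 * p.2 ^ 2) μ :=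
    intof _ _ (mul_pos (mul_pos (mul_pos (pow_pos ha 2) (pow_pos hη₀ 2)) (pow_pos hξ₁ 2))
      (pow_pos hη₁ 2)) m22
  have key : (0 : ℝ) ≤ ∫ p, (ξ₁ ^ 2 - p.1) ^ 2 * (η₁ ^ 2 - p.2) ^ 2 ∂μ :=
    integral_nonneg fun p => by positivity
  -- partial-sum integrability
  have J8 : Integrable (fun p : ℝ × ℝ =>
      (-(2 * ξ₁ ^ 2)) * (p.1 * p.2 ^ 2) + p.1 ^ 2 * p.2 ^ 2) μ := (I12.const_mul _).add I22
  have J7 : Integrable (fun p : ℝ × ℝ => (-(2 * η₁ ^ 2)) * (p.1 ^ 2 * p.2)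
      + ((-(2 * ξ₁ ^ 2)) * (p.1 * p.2 ^ 2) + p.1 ^ 2 * p.2 ^ 2)) μ := (I21.const_mul _).add J8
  have J6 : Integrable (fun p : ℝ × ℝ => ξ₁ ^ 4 * p.2 ^ 2
      + ((-(2 * η₁ ^ 2)) * (p.1 ^ 2 * p.2)
      + ((-(2 * ξ₁ ^ 2)) * (p.1 * p.2 ^ 2) + p.1 ^ 2 * p.2 ^ 2))) μ := (I02.const_mul _).add J7
  have J5 : Integrable (fun p : ℝ × ℝ => (4 * ξ₁ ^ 2 * η₁ ^ 2) * (p.1 * p.2)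
      + (ξ₁ ^ 4 * p.2 ^ 2 + ((-(2 * η₁ ^ 2)) * (p.1 ^ 2 * p.2)
      + ((-(2 * ξ₁ ^ 2)) * (p.1 * p.2 ^ 2) + p.1 ^ 2 * p.2 ^ 2)))) μ := (I11.const_mul _).add J6
  have J4 : Integrable (fun p : ℝ × ℝ => η₁ ^ 4 * p.1 ^ 2
      + ((4 * ξ₁ ^ 2 * η₁ ^ 2) * (p.1 * p.2)
      + (ξ₁ ^ 4 * p.2 ^ 2 + ((-(2 * η₁ ^ 2)) * (p.1 ^ 2 * p.2)
      + ((-(2 * ξ₁ ^ 2)) * (p.1 * p.2 ^ 2) + p.1 ^ 2 * p.2 ^ 2))))) μ := (I20.const_mul _).add J5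
  have J3 : Integrable (fun p : ℝ × ℝ => (-(2 * ξ₁ ^ 4 * η₁ ^ 2)) * p.2
      + (η₁ ^ 4 * p.1 ^ 2 + ((4 * ξ₁ ^ 2 * η₁ ^ 2) * (p.1 * p.2)
      + (ξ₁ ^ 4 * p.2 ^ 2 + ((-(2 * η₁ ^ 2)) * (p.1 ^ 2 * p.2)
      + ((-(2 * ξ₁ ^ 2)) * (p.1 * p.2 ^ 2) + p.1 ^ 2 * p.2 ^ 2)))))) μ := (I01.const_mul _).add J4
  have J2 : Integrable (fun p : ℝ × ℝ => (-(2 * ξ₁ ^ 2 * η₁ ^ 4)) * p.1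
      + ((-(2 * ξ₁ ^ 4 * η₁ ^ 2)) * p.2
      + (η₁ ^ 4 * p.1 ^ 2 + ((4 * ξ₁ ^ 2 * η₁ ^ 2) * (p.1 * p.2)
      + (ξ₁ ^ 4 * p.2 ^ 2 + ((-(2 * η₁ ^ 2)) * (p.1 ^ 2 * p.2)
      + ((-(2 * ξ₁ ^ 2)) * (p.1 * p.2 ^ 2) + p.1 ^ 2 * p.2 ^ 2))))))) μ :=
    (I10.const_mul _).add J3
  have expand : ∫ p, (ξ₁ ^ 2 - p.1) ^ 2 * (η₁ ^ 2 - p.2) ^ 2 ∂μ =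
      ξ₁ ^ 4 * η₁ ^ 4 + (-(2 * ξ₁ ^ 2 * η₁ ^ 4)) * a ^ 2
        + ((-(2 * ξ₁ ^ 4 * η₁ ^ 2)) * b ^ 2 + (η₁ ^ 4 * (a ^ 2 * ξ₁ ^ 2)
        + ((4 * ξ₁ ^ 2 * η₁ ^ 2) * (a ^ 2 * η₀ ^ 2) + (ξ₁ ^ 4 * (b ^ 2 * η₁ ^ 2)
        + ((-(2 * η₁ ^ 2)) * (a ^ 2 * η₀ ^ 2 * ξ₁ ^ 2)
        + ((-(2 * ξ₁ ^ 2)) * (a ^ 2 * η₀ ^ 2 * η₁ ^ 2)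
        + a ^ 2 * η₀ ^ 2 * ξ₁ ^ 2 * η₁ ^ 2)))))) := by
    have hfun : ∀ p : ℝ × ℝ, (ξ₁ ^ 2 - p.1) ^ 2 * (η₁ ^ 2 - p.2) ^ 2 =
        ξ₁ ^ 4 * η₁ ^ 4 + ((-(2 * ξ₁ ^ 2 * η₁ ^ 4)) * p.1
        + ((-(2 * ξ₁ ^ 4 * η₁ ^ 2)) * p.2
        + (η₁ ^ 4 * p.1 ^ 2 + ((4 * ξ₁ ^ 2 * η₁ ^ 2) * (p.1 * p.2)
        + (ξ₁ ^ 4 * p.2 ^ 2 + ((-(2 * η₁ ^ 2)) * (p.1 ^ 2 * p.2)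
        + ((-(2 * ξ₁ ^ 2)) * (p.1 * p.2 ^ 2) + p.1 ^ 2 * p.2 ^ 2))))))) := fun p => by ring
    simp only [hfun]
    rw [integral_add (integrable_const _) J2, integral_add (I10.const_mul _) J3,
      integral_add (I01.const_mul _) J4, integral_add (I20.const_mul _) J5,
      integral_add (I11.const_mul _) J6, integral_add (I02.const_mul _) J7,
      integral_add (I21.const_mul _) J8, integral_add (I12.const_mul _) I22]
    simp only [integral_const_mul, integral_const, measure_univ, probReal_univ, ENNReal.toReal_one,
      smul_eq_mul, one_mul]
    rw [m10, m01, m20, m11, m02, m21, m12, m22]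
    ring
  rw [expand] at key
  -- b^2 * ξ₀^2 = a^2 * η₀^2
  have hb2 : b ^ 2 * ξ₀ ^ 2 = a ^ 2 * η₀ ^ 2 := by
    have h := congrArg (fun x : ℝ => x ^ 2) hcomm
    simp only [mul_pow] at h
    linarith
  have hE : 0 ≤ ξ₁ ^ 2 * η₁ ^ 2 - a ^ 2 * η₁ ^ 2 - b ^ 2 * ξ₁ ^ 2 + a ^ 2 * η₀ ^ 2 := by
    by_contra h
    push_neg at h
    nlinarith [key, mul_pos (pow_pos hξ₁ 2) (pow_pos hη₁ 2)]
  have hD : 0 < ξ₁ ^ 2 * η₀ ^ 2 + ξ₀ ^ 2 * η₁ ^ 2 - ξ₀ ^ 2 * η₀ ^ 2 := by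
    have hq : η₀ ^ 2 < η₁ ^ 2 := by nlinarith [mul_pos (sub_pos.mpr hη) (by linarith : (0:ℝ) < η₁ + η₀)]
    have h1 : ξ₀ ^ 2 * η₀ ^ 2 < ξ₀ ^ 2 * η₁ ^ 2 := mul_lt_mul_of_pos_left hq (pow_pos hξ₀ 2)
    nlinarith [mul_pos (pow_pos hξ₁ 2) (pow_pos hη₀ 2)]
  rw [Real.le_sqrt' ha, le_div_iff₀ hD]
  have hE' := mul_le_mul_of_nonneg_left hE (pow_pos hξ₀ 2).le
  have hb2' : b ^ 2 * ξ₀ ^ 2 * ξ₁ ^ 2 = a ^ 2 * η₀ ^ 2 * ξ₁ ^ 2 := by rw [hb2]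
  nlinarith [hE', hb2']
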